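/- Let (X,d) be a metric space endowed with a Borel measure μ satisfying μ(B(x,R)) ≤ C_V · R^m for all x ∈ X and R > 0, where m > 0 and C_V > 0. Let p ∈ (1,∞), λ ∈ [0,m), and let S : X × X → ℝ be measurable with |S(x,y)| ≤ C_S · d(x,y)^{−m} for all x ≠ y. Assume that for every f ∈ L^p(μ) the integral ∫_X |S(x,y) f(y)| dμ(y) is finite for μ-almost every x, and that the operator T f(x) = ∫_X S(x,y) f(y) dμ(y) satisfies ‖T f‖_{L^p(μ)} ≤ C_T · ‖f‖_{L^p(μ)} for every f ∈ L^p(μ). Then there exists C > 0, depending only on m, p, λ, C_V, C_S and C_T, with the following property: for every measurable f : X → ℝ and N ≥ 0 such that ∫_{B(x,R)} |f|^p dμ ≤ N^p R^λ for all x ∈ X and R > 0, and for every x₀ ∈ X and R > 0, the function y ↦ S(x,y) f(y) is μ-integrable for μ-almost every x ∈ B(x₀,R), and ∫_{B(x₀,R)} | ∫_X S(x,y) f(y) dμ(y) |^p dμ(x) ≤ C^p · N^p · R^λ. -/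

import Mathlib

open MeasureTheory

lemma aux_holder_one {X : Type*} [MeasurableSpace X] (μ : Measure X) {p q : ℝ}
    (hpq : p.HolderConjugate q) {g : X → ENNReal} (hg : Measurable g) (s : Set X) :
    ∫⁻ y in s, g y ∂μ ≤ (∫⁻ y in s, g y ^ p ∂μ) ^ (1/p) * (μ s) ^ (1/q) := by
  have := ENNReal.lintegral_mul_le_Lp_mul_Lq (μ.restrict s) hpq
    hg.aemeasurable (aemeasurable_const (b := (1 : ENNReal)))
  simpa [ENNReal.one_rpow, Measure.restrict_apply_univ] using this

lemma aux_abs_add_rpow_le {p : ℝ} (hp : 0 ≤ p) (a b : ℝ) :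
    |a + b| ^ p ≤ 2 ^ p * (|a| ^ p + |b| ^ p) := by
  have h1 : |a + b| ≤ 2 * max |a| |b| := by
    refine (abs_add_le a b).trans ?_
    rcases le_total |a| |b| with h | h
    · rw [max_eq_right h]; linarith
    · rw [max_eq_left h]; linarith
  have hmax0 : (0:ℝ) ≤ max |a| |b| := le_max_of_le_left (abs_nonneg a)
  calc |a + b| ^ p ≤ (2 * max |a| |b|) ^ p :=
        Real.rpow_le_rpow (abs_nonneg _) h1 hp
    _ = 2 ^ p * (max |a| |b|) ^ p := Real.mul_rpow (by norm_num) hmax0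
    _ ≤ 2 ^ p * (|a| ^ p + |b| ^ p) := by
        refine mul_le_mul_of_nonneg_left ?_ (Real.rpow_nonneg (by norm_num) p)
        rcases le_total |a| |b| with h | h
        · rw [max_eq_right h]
          nlinarith [Real.rpow_nonneg (abs_nonneg a) p]
        · rw [max_eq_left h]
          nlinarith [Real.rpow_nonneg (abs_nonneg b) p]

set_option maxHeartbeats 1000000 in
/-- Theorem 7.4: an `L^p`-bounded integral operator whose kernel has
Calderón–Zygmund size `|S(x,y)| ≤ C_S d(x,y)^{-m}` is bounded on the Morrey
space `M_{p,λ}`, under the Euclidean volume upper bound `μ(B(x,R)) ≤ C_V R^m`. -/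
theorem CZ_operator_Morrey_bounded
    {X : Type*} [MetricSpace X] [MeasurableSpace X] [BorelSpace X]
    (μ : Measure X) (m p lam C_V C_S C_T : ℝ)
    (hm : 0 < m) (hp1 : 1 < p) (hlam0 : 0 ≤ lam) (hlamm : lam < m)
    (hCV : 0 < C_V) (hCS : 0 < C_S) (hCT : 0 < C_T)
    (hvol : ∀ (x : X) (R : ℝ), 0 < R → μ (Metric.ball x R) ≤ ENNReal.ofReal (C_V * R ^ m))
    (S : X → X → ℝ)
    (hSmeas : Measurable fun w : X × X => S w.1 w.2)
    (hSbd : ∀ x y : X, x ≠ y → |S x y| ≤ C_S * dist x y ^ (-m))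
    (hTae : ∀ f : X → ℝ, MemLp f (ENNReal.ofReal p) μ →
      ∀ᵐ x ∂μ, Integrable (fun y => S x y * f y) μ)
    (hTbd : ∀ f : X → ℝ, MemLp f (ENNReal.ofReal p) μ →
      eLpNorm (fun x => ∫ y, S x y * f y ∂μ) (ENNReal.ofReal p) μ ≤
        ENNReal.ofReal C_T * eLpNorm f (ENNReal.ofReal p) μ) :
    ∃ C > (0 : ℝ), ∀ f : X → ℝ, Measurable f → ∀ N : ℝ, 0 ≤ N →
      (∀ (x : X) (R : ℝ), 0 < R →
        ∫⁻ y in Metric.ball x R, ENNReal.ofReal (|f y| ^ p) ∂μ ≤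
          ENNReal.ofReal (N ^ p * R ^ lam)) →
      ∀ (x₀ : X) (R : ℝ), 0 < R →
        (∀ᵐ x ∂μ.restrict (Metric.ball x₀ R), Integrable (fun y => S x y * f y) μ) ∧
        ∫⁻ x in Metric.ball x₀ R, ENNReal.ofReal (|∫ y, S x y * f y ∂μ| ^ p) ∂μ ≤
          ENNReal.ofReal (C ^ p * N ^ p * R ^ lam) := by
  have hp0 : (0:ℝ) < p := lt_trans one_pos hp1
  set q : ℝ := p / (p - 1) with hq_def
  have hconj : p.HolderConjugate q := Real.HolderConjugate.conjExponent hp1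
  have hq0 : 0 < q := hconj.symm.pos
  have hPne : (ENNReal.ofReal p) ≠ 0 := by
    simp [ENNReal.ofReal_eq_zero, not_le, hp0]
  have hPtop : (ENNReal.ofReal p) ≠ ⊤ := ENNReal.ofReal_ne_top
  have hPtoReal : (ENNReal.ofReal p).toReal = p := ENNReal.toReal_ofReal hp0.le
  set a : ℝ := lam / p + m / q with ha_def
  set b : ℝ := (m - lam) / p with hb_def
  have hb : 0 < b := div_pos (by linarith) hp0
  have hinv : p⁻¹ + q⁻¹ = 1 := hconj.inv_add_inv_eq_one
  have hab : a - m = -b := by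
    have hq' : q⁻¹ = 1 - p⁻¹ := by linarith [hinv]
    rw [ha_def, hb_def, div_eq_mul_inv m q, hq']
    field_simp
    ring
  set r : ℝ := (2:ℝ) ^ (-b) with hr_def
  have hr0 : 0 < r := Real.rpow_pos_of_pos (by norm_num) _
  have hr1 : r < 1 := Real.rpow_lt_one_of_one_lt_of_neg (by norm_num) (by linarith)
  set K₀ : ℝ := C_S * C_V ^ (1/q) * 4 ^ a with hK0_def
  have hK0 : 0 < K₀ := by positivity
  set K₁ : ℝ := K₀ / (1 - r) with hK1_def
  have hK1 : 0 < K₁ := by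
    apply div_pos hK0; linarith
  set D : ℝ := C_T ^ p * 2 ^ lam + C_V * K₁ ^ p with hD_def
  have hD : 0 < D := by positivity
  set C : ℝ := 2 * D ^ (1/p) with hC_def
  have hC : 0 < C := by positivity
  have hCp : C ^ p = 2 ^ p * D := by
    rw [hC_def, Real.mul_rpow (by norm_num) (Real.rpow_nonneg hD.le _),
      ← Real.rpow_mul hD.le, one_div_mul_cancel hp0.ne', Real.rpow_one]
  refine ⟨C, hC, ?_⟩
  intro f hf N hN hMorrey x₀ R hR
  have hofp : ∀ t : ℝ, ENNReal.ofReal |t| ^ p = ENNReal.ofReal (|t| ^ p) :=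
    fun t => ENNReal.ofReal_rpow_of_nonneg (abs_nonneg t) hp0.le
  -- L¹ bound on balls via Hölder
  have hL1 : ∀ (z : X) (ρ : ℝ), 0 < ρ →
      ∫⁻ y in Metric.ball z ρ, ENNReal.ofReal |f y| ∂μ ≤
        ENNReal.ofReal (N * C_V ^ (1/q) * ρ ^ a) := by
    intro z ρ hρ
    have hg : Measurable fun y => ENNReal.ofReal |f y| :=
      ENNReal.measurable_ofReal.comp hf.abs
    have h1 := aux_holder_one μ hconj hg (Metric.ball z ρ)
    have h2 : (∫⁻ y in Metric.ball z ρ, ENNReal.ofReal |f y| ^ p ∂μ) ^ (1/p) *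
        (μ (Metric.ball z ρ)) ^ (1/q)
        ≤ (ENNReal.ofReal (N ^ p * ρ ^ lam)) ^ (1/p) *
          (ENNReal.ofReal (C_V * ρ ^ m)) ^ (1/q) := by
      gcongr
      · calc ∫⁻ y in Metric.ball z ρ, ENNReal.ofReal |f y| ^ p ∂μ
            = ∫⁻ y in Metric.ball z ρ, ENNReal.ofReal (|f y| ^ p) ∂μ := by
              simp_rw [hofp]
          _ ≤ _ := hMorrey z ρ hρ
      · exact hvol z ρ hρ
    have hreal : (N ^ p * ρ ^ lam) ^ (1/p) * (C_V * ρ ^ m) ^ (1/q) =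
        N * C_V ^ (1/q) * ρ ^ a := by
      rw [Real.mul_rpow (Real.rpow_nonneg hN p) (Real.rpow_nonneg hρ.le lam),
        Real.mul_rpow hCV.le (Real.rpow_nonneg hρ.le m),
        ← Real.rpow_mul hN, ← Real.rpow_mul hρ.le, ← Real.rpow_mul hρ.le,
        mul_one_div_cancel hp0.ne', Real.rpow_one,
        show lam * (1/p) = lam/p by ring, show m * (1/q) = m/q by ring,
        ha_def, Real.rpow_add hρ]
      ring
    refine h1.trans (h2.trans (le_of_eq ?_))
    rw [ENNReal.ofReal_rpow_of_nonneg (by positivity) (by positivity),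
        ENNReal.ofReal_rpow_of_nonneg (by positivity) (by positivity),
        ← ENNReal.ofReal_mul (by positivity), hreal]
  -- splitting of f
  set B2 : Set X := Metric.ball x₀ (2*R) with hB2_def
  have hB2meas : MeasurableSet B2 := Metric.isOpen_ball.measurableSet
  set f₁ : X → ℝ := B2.indicator f with hf₁_def
  set f₂ : X → ℝ := B2ᶜ.indicator f with hf₂_def
  have hf₁m : Measurable f₁ := hf.indicator hB2meas
  have hf₂m : Measurable f₂ := hf.indicator hB2meas.compl
  have hf₁₂ : ∀ y, f₁ y + f₂ y = f y :=
    fun y => congrFun (Set.indicator_self_add_compl B2 f) y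
  have h2R : (0:ℝ) < 2 * R := by linarith
  -- Lᵖ bound for f₁
  have hf₁int : ∫⁻ y, (‖f₁ y‖₊ : ENNReal) ^ p ∂μ ≤ ENNReal.ofReal (N^p * (2*R)^lam) := by
    calc ∫⁻ y, (‖f₁ y‖₊ : ENNReal) ^ p ∂μ
        = ∫⁻ y in B2, ENNReal.ofReal (|f y| ^ p) ∂μ := by
          rw [← lintegral_indicator hB2meas]
          congr 1; funext y
          by_cases hy : y ∈ B2
          · rw [Set.indicator_of_mem hy, hf₁_def, Set.indicator_of_mem hy,
              ← enorm_eq_nnnorm, ← ofReal_norm, Real.norm_eq_abs, hofp]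
          · rw [Set.indicator_of_notMem hy, hf₁_def, Set.indicator_of_notMem hy]
            simp [ENNReal.zero_rpow_of_pos hp0]
      _ ≤ _ := hMorrey x₀ (2*R) h2R
  have hf₁norm : eLpNorm f₁ (ENNReal.ofReal p) μ ≤ ENNReal.ofReal (N * (2*R) ^ (lam/p)) := by
    rw [eLpNorm_eq_lintegral_rpow_enorm_toReal hPne hPtop, hPtoReal]
    calc (∫⁻ y, (‖f₁ y‖₊ : ENNReal) ^ p ∂μ) ^ (1/p)
        ≤ (ENNReal.ofReal (N^p * (2*R)^lam)) ^ (1/p) :=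
          ENNReal.rpow_le_rpow hf₁int (by positivity)
      _ = ENNReal.ofReal (N * (2*R)^(lam/p)) := by
          rw [ENNReal.ofReal_rpow_of_nonneg (by positivity) (by positivity)]
          congr 1
          rw [Real.mul_rpow (Real.rpow_nonneg hN p) (Real.rpow_nonneg h2R.le lam),
            ← Real.rpow_mul hN, ← Real.rpow_mul h2R.le,
            mul_one_div_cancel hp0.ne', Real.rpow_one]
          congr 1; ring
  have hf₁Lp : MemLp f₁ (ENNReal.ofReal p) μ :=
    ⟨hf₁m.aestronglyMeasurable, lt_of_le_of_lt hf₁norm ENNReal.ofReal_lt_top⟩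
  -- the annuli
  set A : ℕ → Set X := fun j =>
    Metric.ball x₀ ((2:ℝ)^(j+2)*R) \ Metric.ball x₀ ((2:ℝ)^(j+1)*R) with hA_def
  have hcover : B2ᶜ ⊆ ⋃ j, A j := by
    intro y hy
    have hy' : 2*R ≤ dist y x₀ := by
      simpa [hB2_def, Metric.mem_ball, not_lt] using hy
    have hex : ∃ j : ℕ, dist y x₀ < (2:ℝ)^(j+2)*R := by
      obtain ⟨n, hn⟩ := pow_unbounded_of_one_lt (dist y x₀ / R) (one_lt_two (α := ℝ))
      refine ⟨n, ?_⟩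
      have h1 : dist y x₀ < 2^n * R := (div_lt_iff₀ hR).mp hn
      have h2 : (2:ℝ)^n ≤ 2^(n+2) := pow_le_pow_right₀ (by norm_num) (by omega)
      nlinarith
    refine Set.mem_iUnion.mpr ⟨Nat.find hex, Nat.find_spec hex, ?_⟩
    simp only [Metric.mem_ball, not_lt]
    rcases Nat.eq_zero_or_pos (Nat.find hex) with h0 | hpos
    · rw [h0]; norm_num; linarith
    · obtain ⟨k, hk⟩ := Nat.exists_eq_add_of_lt hpos
      have := Nat.find_min hex (m := k) (by omega)
      push_neg at this
      have hkk : Nat.find hex + 1 = k + 2 := by omega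
      rw [hkk]; exact this
  -- the key exponent computation
  have hcj : ∀ j : ℕ, C_S * ((2:ℝ)^j*R)^(-m) * (N * C_V^(1/q) * ((2:ℝ)^(j+2)*R)^a)
      = K₀*N*R^(-b) * r^j := by
    intro j
    have e2 : ∀ (k : ℕ) (c : ℝ), ((2:ℝ)^k)^c = (2:ℝ)^((k:ℝ)*c) := by
      intro k c
      rw [← Real.rpow_natCast 2 k, ← Real.rpow_mul (by norm_num)]
    have e3 : (2:ℝ)^(((j:ℝ))*(-m)) * (2:ℝ)^(((j:ℝ)+2)*a) = 4^a * r^j := by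
      rw [← Real.rpow_add (by norm_num : (0:ℝ) < 2),
        show (j:ℝ)*(-m) + ((j:ℝ)+2)*a = 2*a + (j:ℝ)*(-b) by linear_combination (j:ℝ) * hab,
        Real.rpow_add (by norm_num : (0:ℝ) < 2)]
      congr 1
      · rw [show (4:ℝ) = 2*2 by norm_num, Real.mul_rpow (by norm_num) (by norm_num),
          show (2:ℝ)*a = a + a by ring, Real.rpow_add (by norm_num : (0:ℝ) < 2)]
      · rw [hr_def, mul_comm, Real.rpow_mul (by norm_num : (0:ℝ) ≤ 2),
          Real.rpow_natCast]
    have e4 : R^(-m) * R^a = R^(-b) := by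
      rw [← Real.rpow_add hR]
      congr 1; linarith [hab]
    calc C_S * ((2:ℝ)^j*R)^(-m) * (N * C_V^(1/q) * ((2:ℝ)^(j+2)*R)^a)
        = C_S * (((2:ℝ)^j)^(-m) * R^(-m)) * (N * C_V^(1/q) * (((2:ℝ)^(j+2))^a * R^a)) := by
          rw [Real.mul_rpow (by positivity) hR.le, Real.mul_rpow (by positivity) hR.le]
      _ = (C_S * C_V^(1/q)) * N * ((2:ℝ)^((j:ℝ)*(-m)) * (2:ℝ)^(((j:ℝ)+2)*a)) * (R^(-m) * R^a) := by
          rw [e2 j (-m), e2 (j+2) a]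
          push_cast
          ring
      _ = (C_S * C_V^(1/q)) * N * (4^a * r^j) * R^(-b) := by rw [e3, e4]
      _ = K₀*N*R^(-b) * r^j := by rw [hK0_def]; ring
  -- tail bound
  have htail : ∀ x ∈ Metric.ball x₀ R,
      ∫⁻ y, ENNReal.ofReal ‖S x y * f₂ y‖ ∂μ ≤ ENNReal.ofReal (K₁*N*R^(-b)) := by
    intro x hx
    have hxR : dist x x₀ < R := Metric.mem_ball.mp hx
    have step1 : ∫⁻ y, ENNReal.ofReal ‖S x y * f₂ y‖ ∂μ
        = ∫⁻ y in B2ᶜ, ENNReal.ofReal ‖S x y * f y‖ ∂μ := by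
      rw [← lintegral_indicator hB2meas.compl]
      congr 1; funext y
      by_cases hy : y ∈ B2ᶜ
      · rw [Set.indicator_of_mem hy, hf₂_def, Set.indicator_of_mem hy]
      · rw [Set.indicator_of_notMem hy, hf₂_def, Set.indicator_of_notMem hy]
        simp
    have step2 : ∀ j : ℕ, ∫⁻ y in A j, ENNReal.ofReal ‖S x y * f y‖ ∂μ ≤
        ENNReal.ofReal (K₀*N*R^(-b) * r^j) := by
      intro j
      have hrad : (0:ℝ) < (2:ℝ)^j*R := by positivity
      have hptw : ∀ y ∈ A j, ENNReal.ofReal ‖S x y * f y‖ ≤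
          ENNReal.ofReal (C_S * ((2:ℝ)^j*R)^(-m)) * ENNReal.ofReal |f y| := by
        intro y hy
        obtain ⟨hy1, hy2⟩ := hy
        have hd : (2:ℝ)^(j+1)*R ≤ dist y x₀ := by
          simpa [Metric.mem_ball, not_lt] using hy2
        have hdxy : (2:ℝ)^j*R < dist x y := by
          have h1 : dist y x₀ ≤ dist y x + dist x x₀ := dist_triangle y x x₀
          have h2 : (1:ℝ) ≤ 2^j := one_le_pow₀ (by norm_num)
          have h3 : (2:ℝ)^(j+1) = 2 * 2^j := by ring
          rw [dist_comm x y]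
          nlinarith
        have hne : x ≠ y := by
          intro h; rw [h] at hdxy; simp at hdxy; nlinarith
        have hS : |S x y| ≤ C_S * ((2:ℝ)^j*R)^(-m) := by
          refine (hSbd x y hne).trans ?_
          exact mul_le_mul_of_nonneg_left
            (Real.rpow_le_rpow_of_nonpos hrad hdxy.le (by linarith)) hCS.le
        rw [← ENNReal.ofReal_mul (by positivity)]
        apply ENNReal.ofReal_le_ofReal
        rw [norm_mul, Real.norm_eq_abs, Real.norm_eq_abs]
        exact mul_le_mul_of_nonneg_right hS (abs_nonneg _) |>.trans_eq rfl
      calc ∫⁻ y in A j, ENNReal.ofReal ‖S x y * f y‖ ∂μ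
          ≤ ∫⁻ y in A j, ENNReal.ofReal (C_S * ((2:ℝ)^j*R)^(-m)) * ENNReal.ofReal |f y| ∂μ :=
            setLIntegral_mono (Measurable.const_mul
              (ENNReal.measurable_ofReal.comp hf.abs) _) hptw
        _ = ENNReal.ofReal (C_S * ((2:ℝ)^j*R)^(-m)) * ∫⁻ y in A j, ENNReal.ofReal |f y| ∂μ :=
            lintegral_const_mul' _ _ ENNReal.ofReal_ne_top
        _ ≤ ENNReal.ofReal (C_S * ((2:ℝ)^j*R)^(-m)) *
            ∫⁻ y in Metric.ball x₀ ((2:ℝ)^(j+2)*R), ENNReal.ofReal |f y| ∂μ := by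
            gcongr
            exact Set.diff_subset
        _ ≤ ENNReal.ofReal (C_S * ((2:ℝ)^j*R)^(-m)) *
            ENNReal.ofReal (N * C_V^(1/q) * ((2:ℝ)^(j+2)*R)^a) := by
            gcongr
            exact hL1 x₀ _ (by positivity)
        _ = ENNReal.ofReal (K₀*N*R^(-b) * r^j) := by
            rw [← ENNReal.ofReal_mul (by positivity), hcj j]
    calc ∫⁻ y, ENNReal.ofReal ‖S x y * f₂ y‖ ∂μ
        = ∫⁻ y in B2ᶜ, ENNReal.ofReal ‖S x y * f y‖ ∂μ := step1
      _ ≤ ∫⁻ y in ⋃ j, A j, ENNReal.ofReal ‖S x y * f y‖ ∂μ := lintegral_mono_set hcover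
      _ ≤ ∑' j, ∫⁻ y in A j, ENNReal.ofReal ‖S x y * f y‖ ∂μ := lintegral_iUnion_le _ _
      _ ≤ ∑' j, ENNReal.ofReal (K₀*N*R^(-b) * r^j) := ENNReal.tsum_le_tsum step2
      _ = ENNReal.ofReal (∑' j, K₀*N*R^(-b) * r^j) := by
          rw [ENNReal.ofReal_tsum_of_nonneg (fun j => by positivity)
            ((summable_geometric_of_lt_one hr0.le hr1).mul_left _)]
      _ = ENNReal.ofReal (K₁*N*R^(-b)) := by
          rw [tsum_mul_left, tsum_geometric_of_lt_one hr0.le hr1, hK1_def]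
          congr 1
          ring
  -- integrability of the far part
  have hint₂ : ∀ x ∈ Metric.ball x₀ R, Integrable (fun y => S x y * f₂ y) μ := by
    intro x hx
    have hSxm : Measurable fun y => S x y :=
      hSmeas.comp (measurable_const.prodMk measurable_id)
    refine ⟨(hSxm.mul hf₂m).aestronglyMeasurable, ?_⟩
    rw [hasFiniteIntegral_iff_norm]
    exact lt_of_le_of_lt (htail x hx) ENNReal.ofReal_lt_top
  -- conclusion
  have hae1 : ∀ᵐ x ∂μ, Integrable (fun y => S x y * f₁ y) μ := hTae f₁ hf₁Lp
  set M : ℝ := K₁*N*R^(-b) with hM_def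
  have hM0 : 0 ≤ M := by positivity
  have hT₂bd : ∀ x ∈ Metric.ball x₀ R, |∫ y, S x y * f₂ y ∂μ| ≤ M := by
    intro x hx
    rw [← Real.norm_eq_abs]
    refine (norm_integral_le_lintegral_norm _).trans ?_
    exact ENNReal.toReal_le_of_le_ofReal hM0 (htail x hx)
  constructor
  · filter_upwards [ae_restrict_of_ae hae1, ae_restrict_mem measurableSet_ball]
      with x h1 hx
    have h2 := hint₂ x hx
    have heq : (fun y => S x y * f y) =
        (fun y => S x y * f₁ y) + fun y => S x y * f₂ y := by
      funext y; simp only [Pi.add_apply, ← mul_add, hf₁₂ y]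
    rw [heq]; exact h1.add h2
  · set g₁ : X → ℝ := fun x => ∫ y, S x y * f₁ y ∂μ with hg₁_def
    have h2p0 : (0:ℝ) ≤ 2^p := Real.rpow_nonneg (by norm_num) p
    have hsplit : ∀ᵐ x ∂μ.restrict (Metric.ball x₀ R),
        ENNReal.ofReal (|∫ y, S x y * f y ∂μ| ^ p) ≤
          ENNReal.ofReal (2^p) *
            (ENNReal.ofReal (|g₁ x| ^ p) + ENNReal.ofReal (M ^ p)) := by
      filter_upwards [ae_restrict_of_ae hae1, ae_restrict_mem measurableSet_ball]
        with x h1 hx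
      have h2 := hint₂ x hx
      have hTsplit : ∫ y, S x y * f y ∂μ = g₁ x + ∫ y, S x y * f₂ y ∂μ := by
        rw [hg₁_def, ← integral_add h1 h2]
        congr 1; funext y; rw [← mul_add, hf₁₂ y]
      calc ENNReal.ofReal (|∫ y, S x y * f y ∂μ| ^ p)
          ≤ ENNReal.ofReal (2^p * (|g₁ x|^p + |∫ y, S x y * f₂ y ∂μ|^p)) := by
            apply ENNReal.ofReal_le_ofReal
            rw [hTsplit]
            exact aux_abs_add_rpow_le hp0.le _ _
        _ ≤ ENNReal.ofReal (2^p * (|g₁ x|^p + M^p)) := by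
            apply ENNReal.ofReal_le_ofReal
            have h3 : |∫ y, S x y * f₂ y ∂μ|^p ≤ M^p :=
              Real.rpow_le_rpow (abs_nonneg _) (hT₂bd x hx) hp0.le
            exact mul_le_mul_of_nonneg_left (add_le_add_right h3 _) h2p0
        _ = _ := by
            rw [ENNReal.ofReal_mul h2p0,
              ENNReal.ofReal_add (Real.rpow_nonneg (abs_nonneg _) p)
                (Real.rpow_nonneg hM0 p)]
    have hterm1 : ∫⁻ x in Metric.ball x₀ R, ENNReal.ofReal (|g₁ x| ^ p) ∂μ ≤
        ENNReal.ofReal (C_T^p * N^p * (2^lam * R^lam)) := by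
      have hX : ∫⁻ x, ENNReal.ofReal (|g₁ x| ^ p) ∂μ =
          (eLpNorm g₁ (ENNReal.ofReal p) μ)^p := by
        rw [eLpNorm_eq_lintegral_rpow_enorm_toReal hPne hPtop, hPtoReal,
          ← ENNReal.rpow_mul, one_div_mul_cancel hp0.ne', ENNReal.rpow_one]
        congr 1; funext x
        rw [← ofReal_norm, Real.norm_eq_abs, hofp]
      have hbd : (eLpNorm g₁ (ENNReal.ofReal p) μ)^p ≤
          ENNReal.ofReal (C_T^p*N^p*(2^lam*R^lam)) := by
        have h5 := (hTbd f₁ hf₁Lp).trans (mul_le_mul_right hf₁norm _)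
        calc (eLpNorm g₁ (ENNReal.ofReal p) μ)^p
            ≤ (ENNReal.ofReal C_T * ENNReal.ofReal (N * (2*R)^(lam/p)))^p :=
              ENNReal.rpow_le_rpow h5 hp0.le
          _ = ENNReal.ofReal ((C_T * (N * (2*R)^(lam/p)))^p) := by
              rw [← ENNReal.ofReal_mul hCT.le,
                ENNReal.ofReal_rpow_of_nonneg
                  (mul_nonneg hCT.le (mul_nonneg hN (Real.rpow_nonneg h2R.le _))) hp0.le]
          _ = ENNReal.ofReal (C_T^p*N^p*(2^lam*R^lam)) := by
              congr 1
              rw [Real.mul_rpow hCT.le (mul_nonneg hN (Real.rpow_nonneg h2R.le _)),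
                Real.mul_rpow hN (Real.rpow_nonneg h2R.le _),
                ← Real.rpow_mul h2R.le, div_mul_cancel₀ lam hp0.ne',
                Real.mul_rpow (by norm_num) hR.le]
              ring
      calc ∫⁻ x in Metric.ball x₀ R, ENNReal.ofReal (|g₁ x| ^ p) ∂μ
          ≤ ∫⁻ x, ENNReal.ofReal (|g₁ x| ^ p) ∂μ :=
            lintegral_mono' Measure.restrict_le_self le_rfl
        _ ≤ _ := by rw [hX]; exact hbd
    have hterm2 : (ENNReal.ofReal (M^p)) * μ (Metric.ball x₀ R) ≤
        ENNReal.ofReal (C_V * K₁^p * N^p * R^lam) := by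
      have hbp : R^(-b*p) * R^m = R^lam := by
        rw [← Real.rpow_add hR]
        congr 1
        rw [hb_def]; field_simp
        ring
      calc (ENNReal.ofReal (M^p)) * μ (Metric.ball x₀ R)
          ≤ (ENNReal.ofReal (M^p)) * ENNReal.ofReal (C_V * R^m) :=
            mul_le_mul_right (hvol x₀ R hR) _
        _ = ENNReal.ofReal (M^p * (C_V * R^m)) :=
            (ENNReal.ofReal_mul (Real.rpow_nonneg hM0 p)).symm
        _ = ENNReal.ofReal (C_V * K₁^p * N^p * R^lam) := by
          congr 1
          rw [hM_def, show K₁*N*R^(-b) = (K₁*N)*R^(-b) by ring,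
            Real.mul_rpow (mul_nonneg hK1.le hN) (Real.rpow_nonneg hR.le _),
            Real.mul_rpow hK1.le hN, ← Real.rpow_mul hR.le]
          linear_combination (K₁^p * N^p * C_V) * hbp
    calc ∫⁻ x in Metric.ball x₀ R, ENNReal.ofReal (|∫ y, S x y * f y ∂μ| ^ p) ∂μ
        ≤ ∫⁻ x in Metric.ball x₀ R,
            ENNReal.ofReal (2^p) *
              (ENNReal.ofReal (|g₁ x| ^ p) + ENNReal.ofReal (M ^ p)) ∂μ :=
          lintegral_mono_ae hsplit
      _ = ENNReal.ofReal (2^p) *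
            ((∫⁻ x in Metric.ball x₀ R, ENNReal.ofReal (|g₁ x| ^ p) ∂μ)
              + ENNReal.ofReal (M^p) * μ (Metric.ball x₀ R)) := by
          rw [lintegral_const_mul' _ _ ENNReal.ofReal_ne_top,
            lintegral_add_right _ measurable_const, setLIntegral_const]
      _ ≤ ENNReal.ofReal (2^p) * (ENNReal.ofReal (C_T^p*N^p*(2^lam*R^lam)) +
            ENNReal.ofReal (C_V*K₁^p*N^p*R^lam)) :=
          mul_le_mul_right (add_le_add hterm1 hterm2) _
      _ = ENNReal.ofReal (C^p * N^p * R^lam) := by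
          rw [← ENNReal.ofReal_add
              (mul_nonneg (mul_nonneg (Real.rpow_nonneg hCT.le p) (Real.rpow_nonneg hN p))
                (mul_nonneg (Real.rpow_nonneg (by norm_num) lam) (Real.rpow_nonneg hR.le lam)))
              (mul_nonneg (mul_nonneg (mul_nonneg hCV.le (Real.rpow_nonneg hK1.le p))
                (Real.rpow_nonneg hN p)) (Real.rpow_nonneg hR.le lam)),
            ← ENNReal.ofReal_mul h2p0]
          congr 1
          rw [hCp, hD_def]
          ring
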